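/- Let G be a finite simple graph on vertex set V and let {u,v} be an edge of G that is a bridge of G (equivalently, an edge lying on no cycle of G). Let f and f' be flows on G whose divergences agree at every vertex of V. Then f(u,v) = f'(u,v). In other words, any two solutions of the flow-conservation equations assign the same flow to every edge not belonging to a cycle. -/

import Mathlib

/-- Any two flows with the same divergence everywhere agree on every bridge
(edge lying on no cycle) of the graph. -/
theorem flows_agree_on_bridges {V : Type*} [Fintype V] (G : SimpleGraph V)
    (u v : V) (hbridge : G.IsBridge s(u, v))
    (f f' : V → V → ℝ)
    (hf_skew : ∀ a b, f a b = - f b a)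
    (hf_supp : ∀ a b, ¬ G.Adj a b → f a b = 0)
    (hf'_skew : ∀ a b, f' a b = - f' b a)
    (hf'_supp : ∀ a b, ¬ G.Adj a b → f' a b = 0)
    (hdiv : ∀ a, ∑ b, f a b = ∑ b, f' a b) :
    f u v = f' u v := by
  classical
  have hnr := SimpleGraph.isBridge_iff.mp hbridge
  set G' := G \ SimpleGraph.fromEdgeSet {s(u, v)} with hG'
  set g : V → V → ℝ := fun a b => f a b - f' a b with hg
  have hgskew : ∀ a b, g a b = - g b a := by
    intro a b; simp [hg, hf_skew a b, hf'_skew a b]; ring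
  have hgsupp : ∀ a b, ¬ G.Adj a b → g a b = 0 := by
    intro a b h; simp [hg, hf_supp a b h, hf'_supp a b h]
  have hgdiv : ∀ a, ∑ b, g a b = 0 := by
    intro a; simp [hg, Finset.sum_sub_distrib, hdiv a]
  set S : Finset V := Finset.univ.filter (fun a => G'.Reachable u a) with hS
  have huS : u ∈ S := by simp [hS]
  have hvS : v ∉ S := by simp [hS]; exact hnr
  -- if a ∈ S, b ∉ S, and (a,b) ≠ (u,v), then g a b = 0
  have hzero : ∀ a ∈ S, ∀ b ∈ Sᶜ, ¬(a = u ∧ b = v) → g a b = 0 := by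
    intro a ha b hb hne
    by_cases hadj : G.Adj a b
    · exfalso
      have haS : G'.Reachable u a := by simpa [hS] using ha
      have hbS : ¬ G'.Reachable u b := by
        simpa [hS] using (Finset.mem_compl.mp hb)
      have hsne : s(a, b) ≠ s(u, v) := by
        intro h
        rcases Sym2.eq_iff.mp h with ⟨rfl, rfl⟩ | ⟨rfl, rfl⟩
        · exact hne ⟨rfl, rfl⟩
        · exact hvS (by simpa [hS] using haS)
      have hadj' : G'.Adj a b := by
        simp [hG', SimpleGraph.fromEdgeSet_adj, hadj, hsne]
      exact hbS (haS.trans hadj'.reachable)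
    · exact hgsupp a b hadj
  have h0 : ∑ a ∈ S, ∑ b, g a b = 0 := by
    simp [hgdiv]
  have hsplit : ∀ a, ∑ b, g a b = ∑ b ∈ S, g a b + ∑ b ∈ Sᶜ, g a b := by
    intro a; rw [Finset.sum_add_sum_compl]
  have hSS : ∑ a ∈ S, ∑ b ∈ S, g a b = 0 := by
    have := Finset.sum_comm (s := S) (t := S) (f := fun a b => g a b)
    have h2 : ∑ a ∈ S, ∑ b ∈ S, g a b = - ∑ a ∈ S, ∑ b ∈ S, g a b := by
      calc ∑ a ∈ S, ∑ b ∈ S, g a b = ∑ b ∈ S, ∑ a ∈ S, g a b := this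
        _ = ∑ b ∈ S, ∑ a ∈ S, (- g b a) := by
              apply Finset.sum_congr rfl; intro b _
              apply Finset.sum_congr rfl; intro a _
              rw [hgskew a b]
        _ = - ∑ a ∈ S, ∑ b ∈ S, g a b := by simp [Finset.sum_neg_distrib]
    linarith
  have hSc : ∑ a ∈ S, ∑ b ∈ Sᶜ, g a b = g u v := by
    have : ∀ a ∈ S, ∑ b ∈ Sᶜ, g a b = if a = u then g u v else 0 := by
      intro a ha
      by_cases hau : a = u
      · subst hau
        simp only [if_pos rfl]
        apply Finset.sum_eq_single v
        · intro b hb hbv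
          exact hzero a ha b hb (by tauto)
        · intro hv; exact absurd (Finset.mem_compl.mpr hvS) hv
      · simp only [if_neg hau]
        apply Finset.sum_eq_zero
        intro b hb
        exact hzero a ha b hb (by tauto)
    rw [Finset.sum_congr rfl this]
    simp [huS]
  have : g u v = 0 := by
    have := h0
    rw [Finset.sum_congr rfl (fun a _ => hsplit a), Finset.sum_add_distrib, hSS, hSc] at this
    linarith
  have : f u v - f' u v = 0 := this
  linarith
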